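/- arXiv:1207.2008 — 2 statements merged into one kernel-verified Lean document; each statement's English description precedes it below -/
import Mathlib

section
/- For every n ≥ 2: every down-up permutation σ of length 2n+1 satisfies mmp^{(1,0,∅,0)}(σ) ≤ n+1, and the number of down-up permutations σ of length 2n+1 with mmp^{(1,0,∅,0)}(σ) = n+1 equals (2n)!! − (2n−1)!!. (Equivalently, the highest power of x appearing in D^{(1,0,∅,0)}_{2n+1}(x) is x^{n+1}, with coefficient (2n)!! − (2n−1)!!.) -/
/-- A permutation `σ` of `{1,…,n}` (as a permutation of `Fin n`) is up-down if
`σ_1 < σ_2 > σ_3 < σ_4 > ⋯`. -/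
def UpDown {n : ℕ} (σ : Equiv.Perm (Fin n)) : Prop :=
  ∀ i : Fin n, ∀ h : i.val + 1 < n,
    if Even i.val then σ i < σ ⟨i.val + 1, h⟩ else σ ⟨i.val + 1, h⟩ < σ i

/-- A permutation is down-up if `σ_1 > σ_2 < σ_3 > σ_4 < ⋯`. -/
def DownUp {n : ℕ} (σ : Equiv.Perm (Fin n)) : Prop :=
  ∀ i : Fin n, ∀ h : i.val + 1 < n,
    if Even i.val then σ ⟨i.val + 1, h⟩ < σ i else σ i < σ ⟨i.val + 1, h⟩

/-- `σ_i` matches `MMP(1,0,∅,0)`: there exists `j > i` with `σ_j > σ_i` and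
there is no `j < i` with `σ_j < σ_i`. -/
def Matches1 {n : ℕ} (σ : Equiv.Perm (Fin n)) (i : Fin n) : Prop :=
  (∃ j, i < j ∧ σ i < σ j) ∧ ¬ ∃ j, j < i ∧ σ j < σ i

/-- `mmp^{(1,0,∅,0)}(σ)`: the number of indices matching `MMP(1,0,∅,0)` in `σ`. -/
noncomputable def mmp1 {n : ℕ} (σ : Equiv.Perm (Fin n)) : ℕ :=
  {i : Fin n | Matches1 σ i}.ncard

/-- The odd double factorial `(2n−1)!! = ∏_{i=1}^{n} (2i−1)`. -/
def oddDF (n : ℕ) : ℕ := ∏ i ∈ Finset.range n, (2*i+1)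

/-- The even double factorial `(2n)!! = ∏_{i=1}^{n} 2i`. -/
def evenDF (n : ℕ) : ℕ := ∏ i ∈ Finset.range n, (2*i+2)


open Equiv Finset

/-- prefix-minimum condition at odd positions -/
def condA {m : ℕ} (σ : Equiv.Perm (Fin m)) : Prop :=
  ∀ p : Fin m, Odd p.val → p.val + 2 ≤ m → ∀ j : Fin m, j.val < p.val + 2 → σ p ≤ σ j

/-- every value is at most the first entry -/
def condB {m : ℕ} (σ : Equiv.Perm (Fin m)) : Prop := ∀ i j : Fin m, j.val = 0 → σ i ≤ σ j

section Construct
variable {M : ℕ}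

lemma castAdd_inj : Function.Injective (Fin.castAdd 2 : Fin M → Fin (M+2)) :=
  (Fin.strictMono_castAdd 2).injective

/-- values of σ on the first M positions -/
def sset (σ : Equiv.Perm (Fin (M+2))) : Finset (Fin (M+2)) :=
  Finset.image (fun i : Fin M => σ (Fin.castAdd 2 i)) Finset.univ

lemma sset_card (σ : Equiv.Perm (Fin (M+2))) : (sset σ).card = M := by
  rw [sset, Finset.card_image_of_injective _
    (fun a b hab => castAdd_inj (σ.injective hab))]
  exact Finset.card_univ.trans (Fintype.card_fin M)

noncomputable def e1 (σ : Equiv.Perm (Fin (M+2))) : Fin M ≃ {x // x ∈ sset σ} := by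
  apply Equiv.ofBijective (fun i => ⟨σ (Fin.castAdd 2 i),
    Finset.mem_image_of_mem _ (Finset.mem_univ i)⟩)
  rw [Fintype.bijective_iff_injective_and_card]
  constructor
  · intro a b hab
    exact castAdd_inj (σ.injective (Subtype.ext_iff.mp hab))
  · rw [Fintype.card_coe, sset_card, Fintype.card_fin]

lemma e1_coe (σ : Equiv.Perm (Fin (M+2))) (i : Fin M) :
    (e1 σ i : Fin (M+2)) = σ (Fin.castAdd 2 i) := rfl

/-- the pattern of σ on the first M positions -/
noncomputable def patt (σ : Equiv.Perm (Fin (M+2))) : Equiv.Perm (Fin M) :=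
  (e1 σ).trans ((sset σ).orderIsoOfFin (sset_card σ)).symm.toEquiv

lemma oiOfFin_patt (σ : Equiv.Perm (Fin (M+2))) (i : Fin M) :
    ((sset σ).orderIsoOfFin (sset_card σ) (patt σ i) : Fin (M+2)) = σ (Fin.castAdd 2 i) := by
  rw [patt]
  simp only [Equiv.trans_apply, RelIso.coe_fn_toEquiv]
  rw [OrderIso.apply_symm_apply, e1_coe]

lemma patt_le_iff (σ : Equiv.Perm (Fin (M+2))) (i j : Fin M) :
    patt σ i ≤ patt σ j ↔ σ (Fin.castAdd 2 i) ≤ σ (Fin.castAdd 2 j) := by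
  rw [← ((sset σ).orderIsoOfFin (sset_card σ)).le_iff_le, ← Subtype.coe_le_coe,
    oiOfFin_patt, oiOfFin_patt]

/-- candidate value set for the inverse construction -/
def tset (v : Fin (M+1)) : Finset (Fin (M+2)) :=
  Finset.univ \ {(0 : Fin (M+2)), Fin.succ v}

lemma tset_card (v : Fin (M+1)) : (tset v).card = M := by
  rw [tset, Finset.card_sdiff_of_subset (Finset.subset_univ _)]
  rw [Finset.card_univ, Fintype.card_fin, Finset.card_insert_of_notMem, Finset.card_singleton]
  · simp [Finset.mem_singleton, (Fin.succ_ne_zero v).symm]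
  · simp [(Fin.succ_ne_zero v).symm]

lemma mem_tset_iff (v : Fin (M+1)) (x : Fin (M+2)) :
    x ∈ tset v ↔ x ≠ 0 ∧ x ≠ Fin.succ v := by
  simp [tset, Finset.mem_sdiff]

noncomputable def ff (v : Fin (M+1)) : Fin M ≃o {x // x ∈ tset v} :=
  (tset v).orderIsoOfFin (tset_card v)

noncomputable def bfun (v : Fin (M+1)) (τ : Equiv.Perm (Fin M)) : Fin (M+2) → Fin (M+2) :=
  fun i => if h : i.val < M then (ff v (τ ⟨i.val, h⟩) : Fin (M+2))
    else if i.val = M then 0 else Fin.succ v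

lemma ff_ne (v : Fin (M+1)) (x : Fin M) :
    (ff v x : Fin (M+2)) ≠ 0 ∧ (ff v x : Fin (M+2)) ≠ Fin.succ v :=
  (mem_tset_iff v _).mp (ff v x).2

lemma bfun_inj (v : Fin (M+1)) (τ : Equiv.Perm (Fin M)) : Function.Injective (bfun v τ) := by
  intro i j hij
  have hiv : i.val < M + 2 := i.isLt
  have hjv : j.val < M + 2 := j.isLt
  unfold bfun at hij
  split_ifs at hij with h1 h2 h3 h4 h5 h6
  · -- both < M
    apply Fin.ext
    have h' := τ.injective ((ff v).injective (Subtype.ext hij))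
    have h'' : i.val = j.val := by simpa using h'
    exact h''
  · exact absurd hij (ff_ne v _).1
  · exact absurd hij (ff_ne v _).2
  · exact absurd hij.symm (ff_ne v _).1
  · exact Fin.ext (by omega)
  · exact absurd hij.symm (Fin.succ_ne_zero v)
  · exact absurd hij.symm (ff_ne v _).2
  · exact absurd hij (Fin.succ_ne_zero v)
  · exact Fin.ext (by omega)

noncomputable def bperm (v : Fin (M+1)) (τ : Equiv.Perm (Fin M)) : Equiv.Perm (Fin (M+2)) :=
  Equiv.ofBijective (bfun v τ) (Finite.injective_iff_bijective.mp (bfun_inj v τ))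

lemma bperm_castAdd (v : Fin (M+1)) (τ : Equiv.Perm (Fin M)) (i : Fin M) :
    bperm v τ (Fin.castAdd 2 i) = (ff v (τ i) : Fin (M+2)) := by
  have h : (Fin.castAdd 2 i).val < M := i.isLt
  simp only [bperm, Equiv.ofBijective_apply, bfun, dif_pos h]
  congr

lemma bperm_mid (v : Fin (M+1)) (τ : Equiv.Perm (Fin M)) (h : M < M + 2) :
    bperm v τ ⟨M, h⟩ = 0 := by
  simp [bperm, bfun]

lemma bperm_last (v : Fin (M+1)) (τ : Equiv.Perm (Fin M)) :
    bperm v τ (Fin.last (M+1)) = Fin.succ v := by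
  have h1 : ¬ (Fin.last (M+1)).val < M := by rw [Fin.val_last]; omega
  have h2 : ¬ (Fin.last (M+1)).val = M := by rw [Fin.val_last]; omega
  simp [bperm, bfun, h1, h2]

/-- recover v from σ -/
def vOf (σ : Equiv.Perm (Fin (M+2))) : Fin (M+1) :=
  ⟨(σ (Fin.last (M+1))).val - 1, by have := (σ (Fin.last (M+1))).isLt; omega⟩

lemma vOf_bperm (v : Fin (M+1)) (τ : Equiv.Perm (Fin M)) : vOf (bperm v τ) = v := by
  apply Fin.ext
  simp [vOf, bperm_last]

lemma sset_bperm (v : Fin (M+1)) (τ : Equiv.Perm (Fin M)) : sset (bperm v τ) = tset v := by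
  apply Finset.eq_of_subset_of_card_le
  · intro x hx
    rw [sset, Finset.mem_image] at hx
    obtain ⟨i, _, rfl⟩ := hx
    rw [bperm_castAdd]
    exact (ff v (τ i)).2
  · rw [tset_card, sset_card]

lemma orderIsoOfFin_congr {α : Type*} [LinearOrder α] {s t : Finset α} {k : ℕ}
    (hst : s = t) (hs : s.card = k) (ht : t.card = k) (i : Fin k) :
    (s.orderIsoOfFin hs i : α) = (t.orderIsoOfFin ht i : α) := by
  subst hst; rfl

lemma patt_bperm (v : Fin (M+1)) (τ : Equiv.Perm (Fin M)) : patt (bperm v τ) = τ := by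
  apply Equiv.ext
  intro i
  have h1 := oiOfFin_patt (bperm v τ) i
  rw [bperm_castAdd] at h1
  have h2 : ((sset (bperm v τ)).orderIsoOfFin (sset_card _) (patt (bperm v τ) i) : Fin (M+2))
      = ((tset v).orderIsoOfFin (tset_card v) (patt (bperm v τ) i) : Fin (M+2)) :=
    orderIsoOfFin_congr (sset_bperm v τ) _ _ _
  rw [h2] at h1
  exact ((ff v).injective (Subtype.ext h1))

end Construct

section Transfer
variable {M : ℕ}

lemma sigma_mid (hM : Odd M) (σ : Equiv.Perm (Fin (M+2))) (h : condA σ) :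
    σ ⟨M, by omega⟩ = 0 := by
  have h1 := h ⟨M, by omega⟩ hM (le_refl _) (σ.symm 0) (by show (σ.symm 0).val < M + 2; exact (σ.symm 0).isLt)
  rw [Equiv.apply_symm_apply] at h1
  exact Fin.le_zero_iff.mp h1

lemma succ_vOf (σ : Equiv.Perm (Fin (M+2))) (hmid : σ ⟨M, by omega⟩ = 0) :
    Fin.succ (vOf σ) = σ (Fin.last (M+1)) := by
  have hne : σ (Fin.last (M+1)) ≠ 0 := by
    rw [← hmid]
    intro hc
    have := σ.injective hc
    have := congrArg Fin.val this
    simp [Fin.val_last] at this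
  have hpos : 0 < (σ (Fin.last (M+1))).val :=
    Nat.pos_of_ne_zero (fun h => hne (Fin.ext h))
  apply Fin.ext
  simp only [Fin.val_succ, vOf]
  omega

lemma sset_eq_tset (σ : Equiv.Perm (Fin (M+2))) (hmid : σ ⟨M, by omega⟩ = 0) :
    sset σ = tset (vOf σ) := by
  ext x
  rw [mem_tset_iff, succ_vOf σ hmid, sset, Finset.mem_image]
  constructor
  · rintro ⟨i, -, rfl⟩
    constructor
    · rw [← hmid]
      intro hc
      have := congrArg Fin.val (σ.injective hc)
      simp only [Fin.coe_castAdd] at this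
      omega
    · intro hc
      have := congrArg Fin.val (σ.injective hc)
      simp only [Fin.coe_castAdd, Fin.val_last] at this
      have := i.isLt
      omega
  · rintro ⟨h0, hlast⟩
    have hi0 : σ.symm x ≠ ⟨M, by omega⟩ := by
      intro hc
      apply h0
      rw [← hmid, ← hc, Equiv.apply_symm_apply]
    have hilast : σ.symm x ≠ Fin.last (M+1) := by
      intro hc
      apply hlast
      rw [← hc, Equiv.apply_symm_apply]
    have hval : (σ.symm x).val < M := by
      have h1 := (σ.symm x).isLt
      have h2 : (σ.symm x).val ≠ M := fun hc => hi0 (Fin.ext hc)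
      have h3 : (σ.symm x).val ≠ M + 1 := fun hc => hilast (Fin.ext (by simp [Fin.val_last, hc]))
      omega
    refine ⟨⟨(σ.symm x).val, hval⟩, Finset.mem_univ _, ?_⟩
    have : Fin.castAdd 2 ⟨(σ.symm x).val, hval⟩ = σ.symm x := Fin.ext rfl
    rw [this, Equiv.apply_symm_apply]

lemma bperm_vOf_patt (σ : Equiv.Perm (Fin (M+2))) (hmid : σ ⟨M, by omega⟩ = 0) :
    bperm (vOf σ) (patt σ) = σ := by
  apply Equiv.ext
  intro i
  have hi := i.isLt
  rcases lt_trichotomy i.val M with h | h | h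
  · have : i = Fin.castAdd 2 ⟨i.val, h⟩ := Fin.ext rfl
    rw [this, bperm_castAdd]
    rw [show (ff (vOf σ) (patt σ ⟨i.val, h⟩) : Fin (M+2))
        = ((sset σ).orderIsoOfFin (sset_card σ) (patt σ ⟨i.val, h⟩) : Fin (M+2)) from
      (orderIsoOfFin_congr (sset_eq_tset σ hmid).symm _ _ _)]
    rw [oiOfFin_patt]
  · have : i = ⟨M, by omega⟩ := Fin.ext h
    rw [this, bperm_mid, hmid]
  · have hM1 : i.val = M + 1 := by omega
    have : i = Fin.last (M+1) := Fin.ext (by simp [Fin.val_last, hM1])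
    rw [this, bperm_last, succ_vOf σ hmid]

lemma bperm_le_iff (v : Fin (M+1)) (τ : Equiv.Perm (Fin M)) (i j : Fin M) :
    bperm v τ (Fin.castAdd 2 i) ≤ bperm v τ (Fin.castAdd 2 j) ↔ τ i ≤ τ j := by
  rw [bperm_castAdd, bperm_castAdd, Subtype.coe_le_coe, (ff v).le_iff_le]

lemma condA_bperm (hM : Odd M) (v : Fin (M+1)) (τ : Equiv.Perm (Fin M)) :
    condA (bperm v τ) ↔ condA τ := by
  constructor
  · intro hσ p hodd hle j hj
    have h1 := hσ (Fin.castAdd 2 p) hodd (by show p.val + 2 ≤ M + 2; have := p.isLt; omega)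
      (Fin.castAdd 2 j) (by show j.val < p.val + 2; exact hj)
    rwa [bperm_le_iff] at h1
  · intro hτ p hodd hle j hj
    rcases eq_or_lt_of_le (show p.val ≤ M by omega) with h | h
    · have : p = ⟨M, by omega⟩ := Fin.ext h
      rw [this, bperm_mid]
      exact Fin.zero_le _
    · have hp2 : p.val + 2 ≤ M := by
        obtain ⟨a, ha⟩ := hodd
        obtain ⟨b, hb⟩ := hM
        omega
      have hjM : j.val < M := by omega
      have hp' : p = Fin.castAdd 2 (⟨p.val, by omega⟩ : Fin M) := Fin.ext rfl
      have hj' : j = Fin.castAdd 2 (⟨j.val, hjM⟩ : Fin M) := Fin.ext rfl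
      rw [hp', hj', bperm_le_iff]
      exact hτ _ hodd hp2 _ hj

lemma condB_bperm (hM : Odd M) (v : Fin (M+1)) (τ : Equiv.Perm (Fin M)) :
    condB (bperm v τ) ↔ (v ≠ Fin.last M ∧ condB τ) := by
  have hM0 : 0 < M := by
    obtain ⟨b, hb⟩ := hM; omega
  have hz : (⟨0, by omega⟩ : Fin (M+2)) = Fin.castAdd 2 (⟨0, hM0⟩ : Fin M) := Fin.ext rfl
  constructor
  · intro h
    have htop : bperm v τ ⟨0, by omega⟩ = Fin.last (M+1) := by
      apply le_antisymm (Fin.le_last _)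
      have := h ((bperm v τ).symm (Fin.last (M+1))) ⟨0, by omega⟩ rfl
      rwa [Equiv.apply_symm_apply] at this
    rw [hz, bperm_castAdd] at htop
    constructor
    · intro hc
      have hmem := (ff v (τ ⟨0, hM0⟩)).2
      rw [mem_tset_iff] at hmem
      apply hmem.2
      rw [htop]
      apply Fin.ext
      simp [Fin.val_succ, Fin.val_last, hc]
    · intro i j hj
      have hj0 : j = ⟨0, hM0⟩ := Fin.ext hj
      rw [← bperm_le_iff v τ]
      exact h _ _ hj
  · rintro ⟨hv, hτ⟩ i j hj
    have hj0 : (⟨j.val, j.isLt⟩ : Fin (M+2)) = j := Fin.ext rfl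
    have hjz : j = ⟨0, by omega⟩ := Fin.ext hj
    have hlmem : Fin.last (M+1) ∈ tset v := by
      rw [mem_tset_iff]
      constructor
      · intro hc
        have := congrArg Fin.val hc
        simp [Fin.val_last] at this
      · intro hc
        apply hv
        have := congrArg Fin.val hc
        simp [Fin.val_last, Fin.val_succ] at this
        exact Fin.ext (by rw [Fin.val_last]; omega)
    set x := (ff v).symm ⟨Fin.last (M+1), hlmem⟩ with hx
    have hfx : (ff v x : Fin (M+2)) = Fin.last (M+1) := by
      rw [hx, OrderIso.apply_symm_apply]
    have hxle : x ≤ τ ⟨0, hM0⟩ := by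
      have := hτ (τ.symm x) ⟨0, hM0⟩ rfl
      rwa [Equiv.apply_symm_apply] at this
    have : Fin.last (M+1) ≤ bperm v τ j := by
      rw [hjz, hz, bperm_castAdd, ← hfx, Subtype.coe_le_coe]
      exact (ff v).le_iff_le.mpr hxle
    exact le_trans (Fin.le_last _) this

end Transfer

section Counting
variable {M : ℕ}

lemma condA_patt (hM : Odd M) (σ : Equiv.Perm (Fin (M+2))) (hA : condA σ) :
    condA (patt σ) := by
  have h := bperm_vOf_patt σ (sigma_mid hM σ hA)
  have h2 := condA_bperm hM (vOf σ) (patt σ)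
  rw [h] at h2
  exact h2.mp hA

lemma condB_patt (hM : Odd M) (σ : Equiv.Perm (Fin (M+2))) (hA : condA σ) (hB : condB σ) :
    vOf σ ≠ Fin.last M ∧ condB (patt σ) := by
  have h := bperm_vOf_patt σ (sigma_mid hM σ hA)
  have h2 := condB_bperm hM (vOf σ) (patt σ)
  rw [h] at h2
  exact h2.mp hB

noncomputable def stepEquiv (hM : Odd M) :
    {σ : Equiv.Perm (Fin (M+2)) // condA σ} ≃ Fin (M+1) × {τ : Equiv.Perm (Fin M) // condA τ} where
  toFun s := (vOf s.1, ⟨patt s.1, condA_patt hM s.1 s.2⟩)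
  invFun p := ⟨bperm p.1 p.2.1, (condA_bperm hM _ _).mpr p.2.2⟩
  left_inv s := Subtype.ext (bperm_vOf_patt s.1 (sigma_mid hM s.1 s.2))
  right_inv p := Prod.ext (vOf_bperm _ _) (Subtype.ext (patt_bperm _ _))

noncomputable def stepEquivB (hM : Odd M) :
    {σ : Equiv.Perm (Fin (M+2)) // condA σ ∧ condB σ} ≃
      {v : Fin (M+1) // v ≠ Fin.last M} × {τ : Equiv.Perm (Fin M) // condA τ ∧ condB τ} where
  toFun s := (⟨vOf s.1, (condB_patt hM s.1 s.2.1 s.2.2).1⟩,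
    ⟨patt s.1, condA_patt hM s.1 s.2.1, (condB_patt hM s.1 s.2.1 s.2.2).2⟩)
  invFun p := ⟨bperm p.1.1 p.2.1, (condA_bperm hM _ _).mpr p.2.2.1,
    (condB_bperm hM _ _).mpr ⟨p.1.2, p.2.2.2⟩⟩
  left_inv s := Subtype.ext (bperm_vOf_patt s.1 (sigma_mid hM s.1 s.2.1))
  right_inv p := Prod.ext (Subtype.ext (vOf_bperm _ _)) (Subtype.ext (patt_bperm _ _))

lemma cardA_step (hM : Odd M) :
    Nat.card {σ : Equiv.Perm (Fin (M+2)) // condA σ}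
      = (M+1) * Nat.card {τ : Equiv.Perm (Fin M) // condA τ} := by
  rw [Nat.card_congr (stepEquiv hM), Nat.card_prod]
  congr 1
  simp [Nat.card_eq_fintype_card]

lemma cardB_step (hM : Odd M) :
    Nat.card {σ : Equiv.Perm (Fin (M+2)) // condA σ ∧ condB σ}
      = M * Nat.card {τ : Equiv.Perm (Fin M) // condA τ ∧ condB τ} := by
  rw [Nat.card_congr (stepEquivB hM), Nat.card_prod]
  congr 1
  rw [Nat.card_eq_fintype_card]
  classical
  rw [Fintype.card_subtype_compl (p := fun v : Fin (M+1) => v = Fin.last M)]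
  rw [Fintype.card_subtype_eq, Fintype.card_fin]
  omega

lemma cardA_one : Nat.card {σ : Equiv.Perm (Fin 1) // condA σ} = 1 := by
  rw [Nat.card_congr (Equiv.subtypeUnivEquiv (fun σ => by
    intro p hodd hle
    omega))]
  rw [Nat.card_eq_fintype_card, Fintype.card_perm, Fintype.card_fin]
  rfl

lemma cardB_one : Nat.card {σ : Equiv.Perm (Fin 1) // condA σ ∧ condB σ} = 1 := by
  rw [Nat.card_congr (Equiv.subtypeUnivEquiv (fun σ => by
    constructor
    · intro p hodd hle; omega
    · intro i j hj
      exact le_of_eq (congrArg σ (Subsingleton.elim i j))))]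
  rw [Nat.card_eq_fintype_card, Fintype.card_perm, Fintype.card_fin]
  rfl

lemma cardA_all (n : ℕ) : Nat.card {σ : Equiv.Perm (Fin (2*n+1)) // condA σ} = evenDF n := by
  induction n with
  | zero => simpa [evenDF] using cardA_one
  | succ k ih =>
    have h : 2*(k+1)+1 = (2*k+1)+2 := by ring
    rw [h, cardA_step ⟨k, by ring⟩, ih, evenDF, evenDF, Finset.prod_range_succ]
    ring

lemma cardB_all (n : ℕ) :
    Nat.card {σ : Equiv.Perm (Fin (2*n+1)) // condA σ ∧ condB σ} = oddDF n := by
  induction n with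
  | zero => simpa [oddDF] using cardB_one
  | succ k ih =>
    have h : 2*(k+1)+1 = (2*k+1)+2 := by ring
    rw [h, cardB_step ⟨k, by ring⟩, ih, oddDF, oddDF, Finset.prod_range_succ]
    ring

end Counting

section Main
variable {n : ℕ}

def sElem (n : ℕ) (k : Fin (n+1)) : Fin (2*n+1) :=
  ⟨if k.val = 0 then 0 else 2*k.val - 1, by have := k.isLt; split <;> omega⟩

def Sfin (n : ℕ) : Finset (Fin (2*n+1)) := Finset.image (sElem n) Finset.univ

lemma sElem_inj (n : ℕ) : Function.Injective (sElem n) := by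
  intro a b hab
  have h := congrArg Fin.val hab
  simp only [sElem] at h
  have ha := a.isLt; have hb := b.isLt
  apply Fin.ext
  split_ifs at h <;> omega

lemma card_Sfin (n : ℕ) : (Sfin n).card = n+1 := by
  rw [Sfin, Finset.card_image_of_injective _ (sElem_inj n), Finset.card_univ, Fintype.card_fin]

lemma mem_Sfin (n : ℕ) (i : Fin (2*n+1)) : i ∈ Sfin n ↔ (i.val = 0 ∨ Odd i.val) := by
  rw [Sfin, Finset.mem_image]
  constructor
  · rintro ⟨k, -, rfl⟩
    simp only [sElem]
    split_ifs with h
    · left; rfl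
    · right; exact ⟨k.val - 1, by have := k.isLt; omega⟩
  · rintro (h | ⟨a, ha⟩)
    · exact ⟨⟨0, by omega⟩, Finset.mem_univ _, Fin.ext (by simp [sElem]; omega)⟩
    · refine ⟨⟨a+1, by have := i.isLt; omega⟩, Finset.mem_univ _, Fin.ext ?_⟩
      simp only [sElem]
      rw [if_neg (by omega)]
      omega

lemma matches_subset (σ : Equiv.Perm (Fin (2*n+1))) (hD : DownUp σ) :
    {i : Fin (2*n+1) | Matches1 σ i} ⊆ ↑(Sfin n) := by
  intro i hi
  simp only [Set.mem_setOf_eq] at hi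
  rw [Finset.mem_coe, mem_Sfin]
  by_contra hc
  push_neg at hc
  obtain ⟨h0, hodd⟩ := hc
  rw [Nat.not_odd_iff_even] at hodd
  obtain ⟨a, ha⟩ := hodd
  have ha1 : 1 ≤ i.val := by omega
  have hj : (i.val - 1) + 1 < 2*n+1 := by have := i.isLt; omega
  have hD' := hD ⟨i.val - 1, by have := i.isLt; omega⟩ hj
  have hne : ¬ Even (i.val - 1) := by rintro ⟨b, hb⟩; omega
  rw [if_neg hne] at hD'
  have heq : (⟨(i.val-1)+1, hj⟩ : Fin (2*n+1)) = i :=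
    Fin.ext (show (i.val-1)+1 = i.val by omega)
  rw [heq] at hD'
  exact hi.2 ⟨⟨i.val-1, by have := i.isLt; omega⟩,
    by rw [Fin.lt_def]; show i.val - 1 < i.val; omega, hD'⟩

lemma part1 (σ : Equiv.Perm (Fin (2*n+1))) (hD : DownUp σ) : mmp1 σ ≤ n+1 := by
  have h := Set.ncard_le_ncard (matches_subset σ hD) (Finset.finite_toSet _)
  rw [Set.ncard_coe_finset, card_Sfin] at h
  exact h

lemma key (σ : Equiv.Perm (Fin (2*n+1))) :
    (DownUp σ ∧ mmp1 σ = n+1) ↔ (condA σ ∧ ¬ condB σ) := by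
  constructor
  · rintro ⟨hD, hm⟩
    have hset : {i | Matches1 σ i} = ↑(Sfin n) := by
      apply Set.eq_of_subset_of_ncard_le (matches_subset σ hD)
      rw [Set.ncard_coe_finset, card_Sfin]
      exact hm.ge
    have hmat : ∀ i : Fin (2*n+1), i.val = 0 ∨ Odd i.val → Matches1 σ i := by
      intro i h
      have h2 : i ∈ (↑(Sfin n) : Set (Fin (2*n+1))) := by
        rw [Finset.mem_coe, mem_Sfin]; exact h
      rw [← hset] at h2
      exact h2
    constructor
    · intro p hodd hle j hj
      have hp := hmat p (Or.inr hodd)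
      by_contra hc
      have hlt : σ j < σ p := lt_of_not_ge hc
      rcases lt_trichotomy j.val p.val with h | h | h
      · exact hp.2 ⟨j, by rw [Fin.lt_def]; exact h, hlt⟩
      · rw [show j = p from Fin.ext h] at hlt
        exact lt_irrefl _ hlt
      · have hj1 : j.val = p.val + 1 := by omega
        have hD' := hD p (by omega)
        rw [if_neg (by rw [Nat.not_even_iff_odd]; exact hodd)] at hD'
        rw [show (⟨p.val+1, by omega⟩ : Fin (2*n+1)) = j from Fin.ext hj1.symm] at hD'
        exact absurd hD' (not_lt.mpr hlt.le)
    · intro hB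
      have h0 := hmat ⟨0, by omega⟩ (Or.inl rfl)
      obtain ⟨j, hj0, hjlt⟩ := h0.1
      exact absurd (hB j ⟨0, by omega⟩ rfl) (not_le.mpr hjlt)
  · rintro ⟨hA, hB⟩
    have hD : DownUp σ := by
      intro i h
      by_cases he : Even i.val
      · rw [if_pos he]
        obtain ⟨a, ha⟩ := he
        have hodd : Odd (i.val+1) := ⟨a, by omega⟩
        have hle : (i.val+1)+2 ≤ 2*n+1 := by omega
        have h2 := hA ⟨i.val+1, h⟩ hodd hle i (by show i.val < i.val+1+2; omega)
        exact lt_of_le_of_ne h2 (fun hc =>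
          (by omega : ¬ (i.val+1 = i.val)) (congrArg Fin.val (σ.injective hc)))
      · rw [if_neg he]
        rw [Nat.not_even_iff_odd] at he
        have hle : i.val + 2 ≤ 2*n+1 := by obtain ⟨a, ha⟩ := he; omega
        have h2 := hA i he hle ⟨i.val+1, h⟩ (by show i.val+1 < i.val+2; omega)
        exact lt_of_le_of_ne h2 (fun hc =>
          (by omega : ¬ (i.val = i.val+1)) (congrArg Fin.val (σ.injective hc)))
    refine ⟨hD, ?_⟩
    have hsub2 : ↑(Sfin n) ⊆ {i | Matches1 σ i} := by
      intro i hi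
      rw [Finset.mem_coe, mem_Sfin] at hi
      simp only [Set.mem_setOf_eq]
      rcases hi with h0 | hodd
      · constructor
        · have hB' : ∃ i' j' : Fin (2*n+1), j'.val = 0 ∧ σ j' < σ i' := by
            by_contra hc
            push_neg at hc
            exact hB (fun i' j' hj' => hc i' j' hj')
          obtain ⟨i', j', hj', hlt⟩ := hB'
          have hji : j' = i := Fin.ext (by omega)
          rw [hji] at hlt
          have hne : i'.val ≠ 0 := by
            intro hc
            rw [show i' = i from Fin.ext (by omega)] at hlt
            exact lt_irrefl _ hlt
          exact ⟨i', by rw [Fin.lt_def]; omega, hlt⟩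
        · rintro ⟨j, hj, -⟩
          rw [Fin.lt_def] at hj
          omega
      · have hle : i.val + 2 ≤ 2*n+1 := by
          obtain ⟨a, ha⟩ := hodd; have := i.isLt; omega
        constructor
        · refine ⟨⟨i.val+1, by omega⟩, by rw [Fin.lt_def]; show i.val < i.val+1; omega, ?_⟩
          have h2 := hA i hodd hle ⟨i.val+1, by omega⟩ (by show i.val+1 < i.val+2; omega)
          exact lt_of_le_of_ne h2 (fun hc =>
            (by omega : ¬ (i.val = i.val+1)) (congrArg Fin.val (σ.injective hc)))
        · rintro ⟨j, hj, hlt⟩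
          rw [Fin.lt_def] at hj
          have h2 := hA i hodd hle j (by omega)
          exact absurd hlt (not_lt.mpr h2)
    have hset : {i | Matches1 σ i} = ↑(Sfin n) :=
      Set.Subset.antisymm (matches_subset σ hD) hsub2
    have hm : mmp1 σ = ({i | Matches1 σ i}).ncard := rfl
    rw [hm, hset, Set.ncard_coe_finset, card_Sfin]

end Main


theorem stmt14 (n : ℕ) (hn : 2 ≤ n) :
    (∀ σ : Equiv.Perm (Fin (2*n+1)), DownUp σ → mmp1 σ ≤ n+1) ∧
    ({σ : Equiv.Perm (Fin (2*n+1)) | DownUp σ ∧ mmp1 σ = n+1}.ncard : ℤ)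
      = (evenDF n : ℤ) - (oddDF n : ℤ) := by
  constructor
  · exact fun σ hD => part1 σ hD
  · have hkey : {σ : Equiv.Perm (Fin (2*n+1)) | DownUp σ ∧ mmp1 σ = n+1}
        = {σ : Equiv.Perm (Fin (2*n+1)) | condA σ} \ {σ | condA σ ∧ condB σ} := by
      ext σ
      simp only [Set.mem_setOf_eq, Set.mem_diff]
      rw [key σ]
      tauto
    rw [hkey]
    have hsub : {σ : Equiv.Perm (Fin (2*n+1)) | condA σ ∧ condB σ}
        ⊆ {σ : Equiv.Perm (Fin (2*n+1)) | condA σ} := fun σ h => h.1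
    rw [Set.ncard_diff hsub (Set.toFinite _)]
    have hA : {σ : Equiv.Perm (Fin (2*n+1)) | condA σ}.ncard = evenDF n := by
      rw [← Nat.card_coe_set_eq]
      exact cardA_all n
    have hB : {σ : Equiv.Perm (Fin (2*n+1)) | condA σ ∧ condB σ}.ncard = oddDF n := by
      rw [← Nat.card_coe_set_eq]
      exact cardB_all n
    rw [hA, hB]
    have hle : oddDF n ≤ evenDF n := by
      apply Finset.prod_le_prod'
      intro i _
      omega
    rw [Nat.cast_sub hle]
end

section
/- For every n ≥ 2, the number of up-down permutations σ of length 2n with mmp^{(1,0,∅,0)}(σ) = n−1 equals (2/3)·C(n,2)·(2n−1)!!, where C(n,2) = n(n−1)/2 is the binomial coefficient. (Equivalently, the coefficient of x^{n−1} in A^{(1,0,∅,0)}_{2n}(x) is (2/3)·C(n,2)·(2n−1)!!.) -/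
set_option maxHeartbeats 800000

variable {α : Type*} [LinearOrder α]

def rud : List α → Prop
  | v :: u :: r => u < v ∧ (∀ w ∈ r.take 1, u < w) ∧ rud r
  | _ => True

instance rud.decidable : (l : List α) → Decidable (rud l)
  | [] => isTrue trivial
  | [_] => isTrue trivial
  | v :: u :: r =>
      have : Decidable (rud r) := rud.decidable r
      by unfold rud; infer_instance

def fails : List α → ℕ
  | _ :: u :: r => fails r + (if ∀ w ∈ r, u < w then 0 else 1)
  | _ => 0

def UDL (s : Finset α) (j : ℕ) : Finset (List α) :=
  (s.sort (· ≤ ·)).permutations.toFinset.filter (fun r => rud r ∧ fails r = j)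

lemma mem_UDL {s : Finset α} {j : ℕ} {r : List α} :
    r ∈ UDL s j ↔ r.Nodup ∧ r.toFinset = s ∧ rud r ∧ fails r = j := by
  simp only [UDL, Finset.mem_filter, List.mem_toFinset, List.mem_permutations]
  constructor
  · rintro ⟨hp, h2, h3⟩
    have hn : r.Nodup := hp.nodup_iff.mpr (s.sort_nodup _)
    refine ⟨hn, ?_, h2, h3⟩
    ext a
    simp [List.mem_toFinset, hp.mem_iff, Finset.mem_sort]
  · rintro ⟨h1, h2, h3, h4⟩
    refine ⟨?_, h3, h4⟩
    apply List.perm_of_nodup_nodup_toFinset_eq h1 (s.sort_nodup _)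
    rw [h2, Finset.sort_toFinset]

lemma mem_toFinset' {l : List α} {a : α} : a ∈ l.toFinset ↔ a ∈ l := List.mem_toFinset

lemma length_of_mem_UDL {s : Finset α} {j : ℕ} {r : List α} (h : r ∈ UDL s j) :
    r.length = s.card := by
  obtain ⟨h1, h2, -⟩ := mem_UDL.mp h
  rw [← h2, List.toFinset_card_of_nodup h1]

lemma card_step (s : Finset α) (hne : s.Nonempty) (j : ℕ) (Q : α → Prop) [DecidablePred Q] :
    ((UDL s j).filter (fun r => (∀ w ∈ r.take 1, Q w) ∧ r.tail.take 1 = [s.min' hne])).card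
      = ∑ v ∈ (s.erase (s.min' hne)).filter Q,
          (UDL ((s.erase (s.min' hne)).erase v) j).card := by
  classical
  set mn := s.min' hne with hmn
  rw [← Finset.card_sigma]
  refine (Finset.card_bij (fun p _ => p.1 :: mn :: p.2) ?_ ?_ ?_).symm
  · rintro ⟨v, r'⟩ hp
    rw [Finset.mem_sigma, Finset.mem_filter] at hp
    obtain ⟨⟨hve, hvQ⟩, hr'⟩ := hp
    have hvs := Finset.mem_of_mem_erase hve
    have hvne := Finset.ne_of_mem_erase hve
    have hmnv : mn < v := Finset.min'_lt_of_mem_erase_min' _ hne hve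
    obtain ⟨hnd, htf, hrud, hfl⟩ := mem_UDL.mp hr'
    have hwr : ∀ w ∈ r', mn < w := by
      intro w hw
      have hw' : w ∈ (s.erase mn).erase v := by rw [← htf]; exact List.mem_toFinset.mpr hw
      exact Finset.min'_lt_of_mem_erase_min' _ hne (Finset.mem_of_mem_erase hw')
    have hvmem : v ∉ r' := by
      intro h
      have : v ∈ (s.erase mn).erase v := by rw [← htf]; exact List.mem_toFinset.mpr h
      exact (Finset.ne_of_mem_erase this) rfl
    have hmnmem : mn ∉ r' := fun h => lt_irrefl mn (hwr mn h)
    rw [Finset.mem_filter]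
    refine ⟨mem_UDL.mpr ⟨?_, ?_, ?_, ?_⟩, ?_, ?_⟩
    · simp only [List.nodup_cons, List.mem_cons]
      exact ⟨by push_neg; exact ⟨hvne, hvmem⟩, hmnmem, hnd⟩
    · simp only [List.toFinset_cons, htf]
      rw [Finset.erase_right_comm]
      rw [Finset.insert_erase (Finset.mem_erase.mpr ⟨hmnv.ne, s.min'_mem hne⟩),
        Finset.insert_erase hvs]
    · exact ⟨hmnv, fun w hw => hwr w (List.take_subset _ _ hw), hrud⟩
    · show fails (v :: mn :: r') = j
      simp only [fails, if_pos hwr, hfl, add_zero]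
    · intro w hw
      simp only [List.take, List.mem_singleton] at hw
      exact hw ▸ hvQ
    · rfl
  · rintro ⟨v1, r1⟩ h1 ⟨v2, r2⟩ h2 h
    simp only [List.cons.injEq] at h
    obtain ⟨rfl, -, rfl⟩ := h
    rfl
  · intro r hr
    rw [Finset.mem_filter] at hr
    obtain ⟨hUDL, hQ, hsec⟩ := hr
    match r with
    | [] => simp at hsec
    | [a] => simp at hsec
    | v :: u :: r' =>
      obtain rfl : u = mn := by simpa using hsec
      obtain ⟨hnd, htf, hrud, hfl⟩ := mem_UDL.mp hUDL
      simp only [List.nodup_cons, List.mem_cons, not_or] at hnd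
      obtain ⟨⟨hvu, hvr⟩, hur, hnd'⟩ := hnd
      have hvs : v ∈ s := by rw [← htf]; simp
      have hwr : ∀ w ∈ r', mn < w := by
        intro w hw
        have hws : w ∈ s := by rw [← htf]; simp [hw]
        refine Finset.min'_lt_of_mem_erase_min' _ hne (Finset.mem_erase.mpr ⟨?_, hws⟩)
        intro e; rw [← hmn] at e; exact hur (e ▸ hw)
      have hfl' : fails r' = j := by
        simpa [fails, if_pos hwr] using hfl
      refine ⟨⟨v, r'⟩, ?_, rfl⟩
      rw [Finset.mem_sigma, Finset.mem_filter]
      refine ⟨⟨Finset.mem_erase.mpr ⟨hvu, hvs⟩, ?_⟩, mem_UDL.mpr ⟨hnd', ?_, hrud.2.2, hfl'⟩⟩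
      · exact hQ v (by simp)
      · ext a
        have hset : a ∈ s ↔ a = v ∨ a = mn ∨ a ∈ r' := by rw [← htf]; simp
        simp only [Finset.mem_erase, hset, List.mem_toFinset]
        have h1 : a ∈ r' → a ≠ v := fun h e => hvr (e ▸ h)
        have h2 : a ∈ r' → a ≠ mn := fun h e => hur (e ▸ h)
        tauto

lemma card_step2 (s : Finset α) (hne : s.Nonempty) :
    ((UDL s 1).filter (fun r => ¬ r.tail.take 1 = [s.min' hne])).card
      = ∑ u ∈ s.erase (s.min' hne), ∑ v ∈ s.filter (u < ·),
          ((UDL ((s.erase u).erase v) 0).filter (fun r => ∀ w ∈ r.take 1, u < w)).card := by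
  classical
  set mn := s.min' hne with hmn
  have hrw : ∑ u ∈ s.erase mn, ∑ v ∈ s.filter (u < ·),
      ((UDL ((s.erase u).erase v) 0).filter (fun r => ∀ w ∈ r.take 1, u < w)).card
      = ((s.erase mn).sigma (fun u => (s.filter (u < ·)).sigma
          (fun v => (UDL ((s.erase u).erase v) 0).filter (fun r => ∀ w ∈ r.take 1, u < w)))).card := by
    rw [Finset.card_sigma]
    exact Finset.sum_congr rfl fun u _ => (Finset.card_sigma _ _).symm
  rw [hrw]
  refine (Finset.card_bij (fun p _ => p.2.1 :: p.1 :: p.2.2) ?_ ?_ ?_).symm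
  · rintro ⟨u, v, r'⟩ hp
    rw [Finset.mem_sigma, Finset.mem_sigma] at hp
    obtain ⟨hu, hv, hr'⟩ := hp
    rw [Finset.mem_filter] at hr' hv
    obtain ⟨hr', hhd⟩ := hr'
    obtain ⟨hvs, huv⟩ := hv
    have hus : u ∈ s := Finset.mem_of_mem_erase hu
    have hune : u ≠ mn := Finset.ne_of_mem_erase hu
    have hmnu : mn < u := Finset.min'_lt_of_mem_erase_min' _ hne hu
    obtain ⟨hnd, htf, hrud, hfl⟩ := mem_UDL.mp hr'
    have hur : u ∉ r' := by
      intro h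
      have : u ∈ (s.erase u).erase v := by rw [← htf]; exact List.mem_toFinset.mpr h
      exact Finset.ne_of_mem_erase (Finset.mem_of_mem_erase this) rfl
    have hvr : v ∉ r' := by
      intro h
      have : v ∈ (s.erase u).erase v := by rw [← htf]; exact List.mem_toFinset.mpr h
      exact Finset.ne_of_mem_erase this rfl
    have hmnr : mn ∈ r' := by
      rw [← List.mem_toFinset, htf]
      exact Finset.mem_erase.mpr ⟨(hmnu.trans huv).ne, Finset.mem_erase.mpr ⟨hmnu.ne, s.min'_mem hne⟩⟩
    rw [Finset.mem_filter]
    refine ⟨mem_UDL.mpr ⟨?_, ?_, ?_, ?_⟩, ?_⟩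
    · simp only [List.nodup_cons, List.mem_cons]
      push_neg
      exact ⟨⟨huv.ne', hvr⟩, hur, hnd⟩
    · simp only [List.toFinset_cons, htf]
      rw [Finset.erase_right_comm]
      rw [Finset.insert_erase (Finset.mem_erase.mpr ⟨huv.ne, hus⟩), Finset.insert_erase hvs]
    · exact ⟨huv, hhd, hrud⟩
    · show fails (v :: u :: r') = 1
      have hneg : ¬ ∀ w ∈ r', u < w := by
        push_neg
        exact ⟨mn, hmnr, hmnu.le⟩
      simp only [fails, if_neg hneg, hfl]
    · simp only [List.tail_cons, List.take, List.cons.injEq]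
      intro h
      exact hune h.1
  · rintro ⟨u1, v1, r1⟩ h1 ⟨u2, v2, r2⟩ h2 h
    simp only [List.cons.injEq] at h
    obtain ⟨rfl, rfl, rfl⟩ := h
    rfl
  · intro r hr
    rw [Finset.mem_filter] at hr
    obtain ⟨hUDL, hsec⟩ := hr
    match r with
    | [] => exact absurd (mem_UDL.mp hUDL).2.2.2 (by simp [fails])
    | [a] => exact absurd (mem_UDL.mp hUDL).2.2.2 (by simp [fails])
    | v :: u :: r' =>
      obtain ⟨hnd, htf, hrud, hfl⟩ := mem_UDL.mp hUDL
      simp only [List.nodup_cons, List.mem_cons, not_or] at hnd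
      obtain ⟨⟨hvu, hvr⟩, hur, hnd'⟩ := hnd
      obtain ⟨huv, hhd, hrud'⟩ := hrud
      have hune : u ≠ mn := by
        intro e
        exact hsec (by simp [e])
      have hus : u ∈ s := by rw [← htf]; simp
      have hvs : v ∈ s := by rw [← htf]; simp
      have hmnu : mn < u :=
        Finset.min'_lt_of_mem_erase_min' _ hne (Finset.mem_erase.mpr ⟨hune, hus⟩)
      have hmnr : mn ∈ r' := by
        have : mn ∈ s := s.min'_mem hne
        rw [← htf] at this
        simp only [List.mem_toFinset, List.mem_cons] at this
        rcases this with h | h | h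
        · exact absurd (h ▸ hmnu.trans huv) (lt_irrefl _)
        · exact absurd h.symm hune
        · exact h
      have hneg : ¬ ∀ w ∈ r', u < w := by
        push_neg
        exact ⟨mn, hmnr, hmnu.le⟩
      have hfl' : fails r' = 0 := by
        have : fails (v :: u :: r') = fails r' + 1 := by
          simp only [fails, if_neg hneg]
        omega
      refine ⟨⟨u, v, r'⟩, ?_, rfl⟩
      rw [Finset.mem_sigma, Finset.mem_sigma]
      refine ⟨Finset.mem_erase.mpr ⟨hune, hus⟩, Finset.mem_filter.mpr ⟨hvs, huv⟩,
        Finset.mem_filter.mpr ⟨mem_UDL.mpr ⟨hnd', ?_, hrud', hfl'⟩, hhd⟩⟩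
      ext a
      have hset : a ∈ s ↔ a = v ∨ a = u ∨ a ∈ r' := by rw [← htf]; simp
      simp only [Finset.mem_erase, hset, List.mem_toFinset]
      have h1 : a ∈ r' → a ≠ v := fun h e => hvr (e ▸ h)
      have h2 : a ∈ r' → a ≠ u := fun h e => hur (e ▸ h)
      tauto


lemma second_eq_min (s : Finset α) (hne : s.Nonempty) {r : List α} (hr : r ∈ UDL s 0)
    (hc : 2 ≤ s.card) : r.tail.take 1 = [s.min' hne] := by
  have hlen : 2 ≤ r.length := by rw [length_of_mem_UDL hr]; exact hc
  match r, hlen with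
  | v :: u :: r', _ =>
    obtain ⟨hnd, htf, hrud, hfl⟩ := mem_UDL.mp hr
    obtain ⟨huv, hhd, hrud'⟩ := hrud
    have hall : ∀ w ∈ r', u < w := by
      by_contra hneg
      have h2 : fails (v :: u :: r') = fails r' + 1 := by
        simp only [fails, if_neg hneg]
      rw [hfl] at h2
      omega
    have hu : u = s.min' hne := by
      refine le_antisymm (Finset.le_min' _ _ _ ?_) (s.min'_le u (by rw [← htf]; simp))
      intro y hy
      rw [← htf] at hy
      simp only [List.mem_toFinset, List.mem_cons] at hy
      rcases hy with rfl | rfl | h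
      · exact huv.le
      · exact le_rfl
      · exact (hall y h).le
    simp [hu]

lemma cardA : ∀ (m : ℕ) (s : Finset α), s.card = 2*m → (UDL s 0).card = oddDF m := by
  intro m
  induction m with
  | zero =>
    intro s hs
    rw [mul_zero, Finset.card_eq_zero] at hs
    subst hs
    have he : UDL (∅ : Finset α) 0 = {[]} := by
      ext r
      simp only [mem_UDL, Finset.mem_singleton]
      constructor
      · rintro ⟨h1, h2, -, -⟩
        simpa using h2
      · rintro rfl
        exact ⟨List.nodup_nil, by simp, trivial, rfl⟩
    rw [he]
    rfl
  | succ m ih =>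
    intro s hs
    have hne : s.Nonempty := by rw [← Finset.card_pos, hs]; omega
    have hfull : (UDL s 0).filter
        (fun r => (∀ w ∈ r.take 1, True) ∧ r.tail.take 1 = [s.min' hne]) = UDL s 0 := by
      apply Finset.filter_true_of_mem
      intro r hr
      exact ⟨by simp, second_eq_min s hne hr (by omega)⟩
    rw [← hfull, card_step s hne 0 (fun _ => True), Finset.filter_true]
    have hterm : ∀ v ∈ s.erase (s.min' hne),
        (UDL ((s.erase (s.min' hne)).erase v) 0).card = oddDF m := by
      intro v hv
      apply ih
      rw [Finset.card_erase_of_mem hv, Finset.card_erase_of_mem (s.min'_mem hne), hs]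
      omega
    rw [Finset.sum_congr rfl hterm, Finset.sum_const, smul_eq_mul,
      Finset.card_erase_of_mem (s.min'_mem hne), hs]
    have hodd : oddDF (m+1) = oddDF m * (2*m+1) := Finset.prod_range_succ _ _
    rw [hodd, mul_comm (oddDF m) (2*m+1)]
    have h21 : 2 * (m+1) - 1 = 2*m+1 := by omega
    rw [h21]

lemma cardA2 (m : ℕ) (s : Finset α) (hne : s.Nonempty) (hs : s.card = 2*(m+1)) (b : α)
    (hb : s.min' hne < b) :
    ((UDL s 0).filter (fun r => ∀ w ∈ r.take 1, b < w)).card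
      = (s.filter (b < ·)).card * oddDF m := by
  have hfilter : (UDL s 0).filter (fun r => ∀ w ∈ r.take 1, b < w)
      = (UDL s 0).filter (fun r => (∀ w ∈ r.take 1, b < w) ∧ r.tail.take 1 = [s.min' hne]) := by
    apply Finset.filter_congr
    intro r hr
    have h2 := second_eq_min s hne hr (by omega)
    simp [h2]
  rw [hfilter, card_step s hne 0 (fun w => b < w)]
  have hterm : ∀ v ∈ (s.erase (s.min' hne)).filter (b < ·),
      (UDL ((s.erase (s.min' hne)).erase v) 0).card = oddDF m := by
    intro v hv
    apply cardA
    rw [Finset.card_erase_of_mem (Finset.mem_of_mem_filter _ hv),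
      Finset.card_erase_of_mem (s.min'_mem hne), hs]
    omega
  rw [Finset.sum_congr rfl hterm, Finset.sum_const, smul_eq_mul]
  congr 2
  ext a
  simp only [Finset.mem_filter, Finset.mem_erase]
  constructor
  · rintro ⟨⟨-, ha⟩, hba⟩
    exact ⟨ha, hba⟩
  · rintro ⟨ha, hba⟩
    exact ⟨⟨fun e => absurd (e ▸ hba) (lt_asymm hb), ha⟩, hba⟩

lemma filter_lt_erase_min (s : Finset α) (hne : s.Nonempty) {u : α}
    (hu : u ∈ s.erase (s.min' hne)) :
    s.filter (u < ·) = (s.erase (s.min' hne)).filter (u < ·) := by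
  have hmnu : s.min' hne < u := Finset.min'_lt_of_mem_erase_min' _ hne hu
  ext a
  simp only [Finset.mem_filter, Finset.mem_erase]
  constructor
  · rintro ⟨ha, hua⟩
    exact ⟨⟨fun e => absurd (e ▸ hua) (lt_asymm hmnu), ha⟩, hua⟩
  · rintro ⟨⟨-, ha⟩, hua⟩
    exact ⟨ha, hua⟩

lemma sum_rank (F : ℕ → ℕ) (s : Finset α) :
    (∑ u ∈ s, F ((s.filter (u < ·)).card)) = ∑ k ∈ Finset.range s.card, F k := by
  suffices h : ∀ (n : ℕ) (s : Finset α), s.card = n →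
      (∑ u ∈ s, F ((s.filter (u < ·)).card)) = ∑ k ∈ Finset.range n, F k by
    exact (h s.card s rfl).trans rfl
  intro n
  induction n with
  | zero =>
    intro s hn
    rw [Finset.card_eq_zero] at hn
    subst hn
    simp
  | succ n ihn =>
    intro s hn
    have hne : s.Nonempty := Finset.card_pos.mp (by omega)
    have hmem := s.min'_mem hne
    have hce : (s.erase (s.min' hne)).card = n := by
      rw [Finset.card_erase_of_mem hmem, hn]
      omega
    have e1 : s.filter (s.min' hne < ·) = s.erase (s.min' hne) := by
      ext a
      simp only [Finset.mem_filter, Finset.mem_erase]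
      constructor
      · rintro ⟨ha, hlt⟩
        exact ⟨hlt.ne', ha⟩
      · rintro ⟨hne', ha⟩
        exact ⟨ha, lt_of_le_of_ne (s.min'_le a ha) (Ne.symm hne')⟩
    rw [← Finset.add_sum_erase s _ hmem, e1, hce]
    have e2 : ∀ u ∈ s.erase (s.min' hne),
        F ((s.filter (u < ·)).card) = F (((s.erase (s.min' hne)).filter (u < ·)).card) := by
      intro u hu
      rw [filter_lt_erase_min s hne hu]
    rw [Finset.sum_congr rfl e2, ihn _ hce, Finset.sum_range_succ]
    omega

lemma sum_kk (N : ℕ) :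
    ((∑ k ∈ Finset.range N, k*(k-1) : ℕ) : ℚ) = N*((N:ℚ)-1)*((N:ℚ)-2)/3 := by
  induction N with
  | zero => norm_num
  | succ M ih =>
    rw [Finset.sum_range_succ, Nat.cast_add, ih]
    rcases M with _ | K
    · norm_num
    · rw [Nat.add_sub_cancel]
      push_cast
      ring

lemma cardB : ∀ (m : ℕ) (s : Finset α), s.card = 2*m →
    ((UDL s 1).card : ℚ) = (m : ℚ)*((m : ℚ)-1)/3 * oddDF m := by
  intro m
  induction m with
  | zero =>
    intro s hs
    rw [mul_zero, Finset.card_eq_zero] at hs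
    subst hs
    have he : UDL (∅ : Finset α) 1 = ∅ := by
      ext r
      simp only [mem_UDL, Finset.notMem_empty, iff_false, not_and]
      intro h1 h2
      obtain rfl : r = [] := by simpa using h2
      simp [fails]
    rw [he]
    norm_num
  | succ k ihk =>
    intro s hs
    rcases Nat.eq_zero_or_pos k with rfl | hk
    · have he : UDL s 1 = ∅ := by
        ext r
        simp only [Finset.notMem_empty, iff_false]
        intro hr
        have hlen : r.length = 2 := by rw [length_of_mem_UDL hr, hs]
        obtain ⟨v, u, rfl⟩ := List.length_eq_two.mp hlen
        obtain ⟨-, -, -, hfl⟩ := mem_UDL.mp hr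
        simp [fails] at hfl
      rw [he]
      norm_num
    · obtain ⟨j, rfl⟩ : ∃ j, k = j + 1 := ⟨k-1, by omega⟩
      have hne : s.Nonempty := by rw [← Finset.card_pos, hs]; omega
      set mn := s.min' hne with hmn
      have hce : (s.erase mn).card = 2*j+3 := by
        rw [Finset.card_erase_of_mem (s.min'_mem hne), hs]
        omega
      have h1 := card_step s hne 1 (fun _ => True)
      rw [Finset.filter_true] at h1
      have e1 : ((UDL s 1).filter (fun r => r.tail.take 1 = [mn])).card
          = ∑ v ∈ s.erase mn, (UDL ((s.erase mn).erase v) 1).card := by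
        rw [← h1]
        congr 1
        apply Finset.filter_congr
        intro r hr
        simp [hmn]
      have e2 : ((UDL s 1).filter (fun r => ¬ r.tail.take 1 = [mn])).card
          = ∑ c ∈ Finset.range (2*j+3), c*((c-1) * oddDF j) := by
        rw [card_step2 s hne]
        have hterm : ∀ u ∈ s.erase mn,
            (∑ v ∈ s.filter (u < ·), ((UDL ((s.erase u).erase v) 0).filter
              (fun r => ∀ w ∈ r.take 1, u < w)).card)
            = ((s.erase mn).filter (u < ·)).card
                * ((((s.erase mn).filter (u < ·)).card - 1) * oddDF j) := by
          intro u hu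
          have hmnu : mn < u := Finset.min'_lt_of_mem_erase_min' _ hne hu
          have hus : u ∈ s := Finset.mem_of_mem_erase hu
          have hterm2 : ∀ v ∈ s.filter (u < ·),
              ((UDL ((s.erase u).erase v) 0).filter (fun r => ∀ w ∈ r.take 1, u < w)).card
              = ((s.filter (u < ·)).card - 1) * oddDF j := by
            intro v hv
            obtain ⟨hvs, huv⟩ := Finset.mem_filter.mp hv
            have htc : ((s.erase u).erase v).card = 2*(j+1) := by
              rw [Finset.card_erase_of_mem (Finset.mem_erase.mpr ⟨huv.ne', hvs⟩),
                Finset.card_erase_of_mem hus, hs]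
              omega
            have htne : ((s.erase u).erase v).Nonempty := by
              rw [← Finset.card_pos, htc]; omega
            have hmnt : mn ∈ (s.erase u).erase v :=
              Finset.mem_erase.mpr ⟨(hmnu.trans huv).ne,
                Finset.mem_erase.mpr ⟨hmnu.ne, s.min'_mem hne⟩⟩
            have hb : ((s.erase u).erase v).min' htne < u :=
              lt_of_le_of_lt (Finset.min'_le _ _ hmnt) hmnu
            rw [cardA2 j _ htne htc u hb]
            congr 1
            have hfe : ((s.erase u).erase v).filter (u < ·) = (s.filter (u < ·)).erase v := by
              ext a
              simp only [Finset.mem_filter, Finset.mem_erase]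
              constructor
              · rintro ⟨⟨hav, hau, has⟩, hua⟩
                exact ⟨hav, has, hua⟩
              · rintro ⟨hav, has, hua⟩
                exact ⟨⟨hav, hua.ne', has⟩, hua⟩
            rw [hfe, Finset.card_erase_of_mem hv]
          rw [Finset.sum_congr rfl hterm2, Finset.sum_const, smul_eq_mul,
            filter_lt_erase_min s hne hu]
        rw [Finset.sum_congr rfl hterm]
        exact (sum_rank (fun c => c * ((c-1) * oddDF j)) (s.erase mn)).trans (by rw [hce])
      have hsplit : (UDL s 1).card
          = ((UDL s 1).filter (fun r => r.tail.take 1 = [mn])).card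
            + ((UDL s 1).filter (fun r => ¬ r.tail.take 1 = [mn])).card :=
        (Finset.card_filter_add_card_filter_not _).symm
      have hcv : ∀ v ∈ s.erase mn, ((s.erase mn).erase v).card = 2*(j+1) := by
        intro v hv
        rw [Finset.card_erase_of_mem hv, Finset.card_erase_of_mem (s.min'_mem hne), hs]
        omega
      have eA : ((∑ v ∈ s.erase mn, (UDL ((s.erase mn).erase v) 1).card : ℕ) : ℚ)
          = (2*(j:ℚ)+3) * (((j:ℚ)+1)*(((j:ℚ)+1)-1)/3 * oddDF (j+1)) := by
        rw [Nat.cast_sum]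
        rw [Finset.sum_congr rfl (fun v hv => ihk _ (hcv v hv))]
        rw [Finset.sum_const, nsmul_eq_mul, hce]
        push_cast
        ring
      have eB : ((∑ c ∈ Finset.range (2*j+3), c*((c-1) * oddDF j) : ℕ) : ℚ)
          = (2*(j:ℚ)+3)*(2*(j:ℚ)+2)*(2*(j:ℚ)+1)/3 * oddDF j := by
        have hpull : (∑ c ∈ Finset.range (2*j+3), c*((c-1) * oddDF j))
            = (∑ c ∈ Finset.range (2*j+3), c*(c-1)) * oddDF j := by
          rw [Finset.sum_mul]
          exact Finset.sum_congr rfl (fun c _ => by ring)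
        rw [hpull, Nat.cast_mul, sum_kk]
        push_cast
        ring
      have hodd1 : (oddDF (j+1) : ℚ) = oddDF j * (2*(j:ℚ)+1) := by
        have : oddDF (j+1) = oddDF j * (2*j+1) := Finset.prod_range_succ _ _
        rw [this]
        push_cast
        ring
      have hodd2 : (oddDF (j+2) : ℚ) = oddDF j * (2*(j:ℚ)+1) * (2*(j:ℚ)+3) := by
        have h2 : oddDF (j+2) = oddDF (j+1) * (2*(j+1)+1) := Finset.prod_range_succ _ _
        rw [h2, Nat.cast_mul, hodd1]
        push_cast
        ring
      rw [hsplit, e1, e2, Nat.cast_add, eA, eB]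
      rw [hodd1, hodd2]
      push_cast
      ring

section Bridge
variable [Inhabited α]

def UD (l : List α) : Prop :=
  ∀ i : ℕ, i + 1 < l.length →
    if Even i then l.getI i < l.getI (i+1) else l.getI (i+1) < l.getI i

def lrc (l : List α) : ℕ :=
  ((Finset.range l.length).filter (fun i => ∀ j < i, l.getI i < l.getI j)).card

lemma getI_append_left {p q : List α} {i : ℕ} (h : i < p.length) :
    (p ++ q).getI i = p.getI i := by
  rw [List.getI_eq_getElem _ (by simp; omega), List.getI_eq_getElem _ h,
    List.getElem_append_left h]

lemma getI_app_L (p : List α) (u v : α) : (p ++ [u, v]).getI p.length = u := by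
  rw [List.getI_eq_getElem _ (by simp), List.getElem_append_right (le_refl _)]
  simp

lemma getI_app_L1 (p : List α) (u v : α) : (p ++ [u, v]).getI (p.length + 1) = v := by
  rw [List.getI_eq_getElem _ (by simp), List.getElem_append_right (by omega)]
  simp

lemma UD_append (p : List α) (hp : Even p.length) (u v : α) :
    UD (p ++ [u, v]) ↔ UD p ∧ u < v ∧ ∀ w ∈ p.getLast?, u < w := by
  have hlen : (p ++ [u, v]).length = p.length + 2 := by simp
  constructor
  · intro H
    refine ⟨?_, ?_, ?_⟩
    · intro i hi
      have h2 := H i (by omega)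
      rwa [getI_append_left (by omega), getI_append_left (by omega)] at h2
    · have h2 := H p.length (by omega)
      rwa [if_pos hp, getI_app_L, getI_app_L1] at h2
    · intro w hw
      have hpne : p ≠ [] := by rintro rfl; simp at hw
      have hL0 : 1 ≤ p.length := by
        cases p
        · exact absurd rfl hpne
        · simp
      have hlast : p.getLast? = some (p.getI (p.length - 1)) := by
        rw [List.getLast?_eq_getElem?, List.getElem?_eq_getElem (by omega),
          List.getI_eq_getElem _ (by omega)]
      rw [hlast, Option.mem_def, Option.some_inj] at hw
      have h2 := H (p.length - 1) (by omega)
      have hodd : ¬ Even (p.length - 1) := by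
        obtain ⟨t, ht⟩ := hp
        rintro ⟨s, hs⟩
        omega
      rw [if_neg hodd] at h2
      have he : p.length - 1 + 1 = p.length := by omega
      rw [he, getI_app_L, getI_append_left (by omega)] at h2
      rwa [hw] at h2
  · rintro ⟨H, huv, hlast⟩ i hi
    rw [hlen] at hi
    by_cases h1 : i + 1 < p.length
    · have e1 := getI_append_left (q := [u, v]) (by omega : i < p.length)
      have e2 := getI_append_left (q := [u, v]) h1
      rw [e1, e2]
      exact H i h1
    · rcases (by omega : i + 1 = p.length ∨ i = p.length ∨ i = p.length + 1) with h | h | h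
      · -- i = p.length - 1, odd position
        have hodd : ¬ Even i := by
          obtain ⟨t, ht⟩ := hp
          rintro ⟨s, hs⟩
          omega
        rw [if_neg hodd, h, getI_app_L, getI_append_left (by omega)]
        have hpne : p ≠ [] := by rintro rfl; simp at h
        have hlast' : p.getLast? = some (p.getI (p.length - 1)) := by
          rw [List.getLast?_eq_getElem?, List.getElem?_eq_getElem (by omega),
            List.getI_eq_getElem _ (by omega)]
        have := hlast _ (by rw [hlast']; rfl)
        have hi' : i = p.length - 1 := by omega
        rwa [← hi'] at this
      · rw [h, if_pos (h ▸ hp), getI_app_L, getI_app_L1]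
        exact huv
      · omega

lemma lrc_append (p : List α) (u v : α) (huv : u < v) :
    lrc (p ++ [u, v]) = lrc p + (if ∀ w ∈ p, u < w then 1 else 0) := by
  have hlen : (p ++ [u, v]).length = p.length + 2 := by simp
  have hfe : (Finset.range p.length).filter
        (fun i => ∀ j < i, (p ++ [u, v]).getI i < (p ++ [u, v]).getI j)
      = (Finset.range p.length).filter (fun i => ∀ j < i, p.getI i < p.getI j) := by
    apply Finset.filter_congr
    intro i hi
    rw [Finset.mem_range] at hi
    constructor
    · intro h j hj
      have := h j hj
      rwa [getI_append_left (by omega), getI_append_left (by omega)] at this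
    · intro h j hj
      rw [getI_append_left (by omega), getI_append_left (by omega)]
      exact h j hj
  have hC1 : ¬ (∀ j < p.length + 1, (p ++ [u, v]).getI (p.length + 1) < (p ++ [u, v]).getI j) := by
    intro h
    have := h p.length (by omega)
    rw [getI_app_L, getI_app_L1] at this
    exact lt_asymm huv this
  have hC2 : (∀ j < p.length, (p ++ [u, v]).getI p.length < (p ++ [u, v]).getI j)
      ↔ (∀ w ∈ p, u < w) := by
    constructor
    · intro h w hw
      obtain ⟨j, hj, rfl⟩ := List.mem_iff_getElem.mp hw
      have := h j hj
      rwa [getI_app_L, getI_append_left hj, List.getI_eq_getElem _ hj] at this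
    · intro h j hj
      rw [getI_app_L, getI_append_left hj, List.getI_eq_getElem _ hj]
      exact h _ (List.getElem_mem hj)
  rw [lrc, lrc, hlen, show p.length + 2 = (p.length + 1) + 1 from rfl,
    Finset.range_add_one, Finset.range_add_one, Finset.filter_insert, if_neg hC1,
    Finset.filter_insert]
  by_cases hC : ∀ w ∈ p, u < w
  · rw [if_pos (hC2.mpr hC), if_pos hC,
      Finset.card_insert_of_notMem (by simp), hfe]
  · rw [if_neg (fun hh => hC (hC2.mp hh)), if_neg hC, hfe, Nat.add_zero]

lemma take_one_iff (l : List α) (P : α → Prop) :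
    (∀ w ∈ l.take 1, P w) ↔ (∀ w ∈ l.head?, P w) := by
  cases l <;> simp

lemma BR : ∀ (r : List α), Even r.length →
    ((rud r ↔ UD r.reverse) ∧ (rud r → 2 * (lrc r.reverse + fails r) = r.length))
  | [] => fun _ => by
      constructor
      · constructor
        · intro _ i hi
          simp at hi
        · intro _
          trivial
      · intro _
        simp [lrc, fails]
        rfl
  | [a] => fun h => by
      exfalso
      simp [Nat.even_add_one] at h
  | v :: u :: r' => fun h => by
      have hev' : Even r'.length := by
        obtain ⟨t, ht⟩ := h
        simp only [List.length_cons] at ht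
        exact ⟨t - 1, by omega⟩
      obtain ⟨hIff', hCnt'⟩ := BR r' hev'
      have hrev : (v :: u :: r').reverse = r'.reverse ++ [u, v] := by
        simp
      have hpl : Even r'.reverse.length := by simpa using hev'
      have hud := UD_append r'.reverse hpl u v
      have hrudeq : rud (v :: u :: r') ↔
          (u < v ∧ (∀ w ∈ r'.take 1, u < w) ∧ rud r') := Iff.rfl
      constructor
      · rw [hrudeq, hrev, hud, List.getLast?_reverse, take_one_iff]
        constructor
        · rintro ⟨h1, h2, h3⟩
          exact ⟨hIff'.mp h3, h1, h2⟩
        · rintro ⟨h1, h2, h3⟩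
          exact ⟨h2, h3, hIff'.mpr h1⟩
      · intro hr
        obtain ⟨huv, hhd, hrud'⟩ := hrudeq.mp hr
        have hc := hCnt' hrud'
        have hfl : fails (v :: u :: r') = fails r' + (if ∀ w ∈ r', u < w then 0 else 1) := rfl
        rw [hrev, lrc_append _ _ _ huv, hfl]
        have hmem : (∀ w ∈ r'.reverse, u < w) ↔ (∀ w ∈ r', u < w) := by
          simp [List.mem_reverse]
        simp only [List.length_cons]
        by_cases hC : ∀ w ∈ r', u < w
        · rw [if_pos (hmem.mpr hC), if_pos hC]
          omega
        · rw [if_neg (fun hh => hC (hmem.mp hh)), if_neg hC]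
          omega


section PermBridge
variable {N : ℕ}

lemma matches_iff (hN : Even N) (σ : Equiv.Perm (Fin N)) (hσ : UpDown σ) (i : Fin N) :
    Matches1 σ i ↔ ∀ j < i, σ i < σ j := by
  constructor
  · rintro ⟨-, h2⟩ j hj
    push_neg at h2
    have hle : σ i ≤ σ j := h2 j hj
    have hne : σ i ≠ σ j := fun e => absurd (σ.injective e) hj.ne'
    exact lt_of_le_of_ne hle hne
  · intro h
    have hev : Even i.val := by
      by_contra hodd
      have h1 : 1 ≤ i.val := by
        rcases Nat.eq_zero_or_pos i.val with h0 | h0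
        · rw [h0] at hodd
          exact absurd Even.zero hodd
        · exact h0
      have hlt : i.val - 1 < N := by have := i.isLt; omega
      have hi1 : (i.val - 1) + 1 < N := by have := i.isLt; omega
      have hstep := hσ ⟨i.val - 1, hlt⟩ hi1
      have hmod : i.val % 2 = 1 := Nat.odd_iff.mp (Nat.not_even_iff_odd.mp hodd)
      have hevn : Even ((⟨i.val - 1, hlt⟩ : Fin N)).val := by
        simp only []
        exact Nat.even_iff.mpr (by omega)
      rw [if_pos hevn] at hstep
      have hfin : (⟨(i.val - 1) + 1, hi1⟩ : Fin N) = i := Fin.ext (by simp; omega)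
      rw [hfin] at hstep
      have h2 := h ⟨i.val - 1, hlt⟩ (by rw [Fin.lt_def]; simp; omega)
      exact lt_asymm hstep h2
    have hi1 : i.val + 1 < N := by
      obtain ⟨t, ht⟩ := hN
      obtain ⟨s, hs⟩ := hev
      have := i.isLt
      omega
    have hstep := hσ i hi1
    rw [if_pos hev] at hstep
    refine ⟨⟨⟨i.val + 1, hi1⟩, by rw [Fin.lt_def]; simp, hstep⟩, ?_⟩
    rintro ⟨j, hj, hlt⟩
    exact lt_asymm hlt (h j hj)

variable [Inhabited (Fin N)]

lemma getI_ofFn (σ : Equiv.Perm (Fin N)) (k : ℕ) (hk : k < N) :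
    (List.ofFn σ).getI k = σ ⟨k, hk⟩ := by
  rw [List.getI_eq_getElem _ (by simpa using hk), List.getElem_ofFn]

lemma updown_iff (σ : Equiv.Perm (Fin N)) : UpDown σ ↔ UD (List.ofFn σ) := by
  constructor
  · intro H i hi
    rw [List.length_ofFn] at hi
    have := H ⟨i, by omega⟩ (by simpa using hi)
    rw [getI_ofFn σ i (by omega), getI_ofFn σ (i+1) hi]
    by_cases he : Even i
    · rw [if_pos he]
      rw [if_pos he] at this
      exact this
    · rw [if_neg he]
      rw [if_neg he] at this
      exact this
  · intro H i hi
    have := H i.val (by simpa using hi)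
    rw [getI_ofFn σ i.val (by omega), getI_ofFn σ (i.val+1) hi] at this
    by_cases he : Even i.val
    · rw [if_pos he]
      rw [if_pos he] at this
      convert this using 2
    · rw [if_neg he]
      rw [if_neg he] at this
      convert this using 2

lemma mmp_eq_lrc (hN : Even N) (σ : Equiv.Perm (Fin N)) (hσ : UpDown σ) :
    mmp1 σ = lrc (List.ofFn σ) := by
  classical
  have hset : {i : Fin N | Matches1 σ i}
      = ↑(Finset.univ.filter (fun i : Fin N => ∀ j < i, σ i < σ j)) := by
    ext i
    simp only [Set.mem_setOf_eq, Finset.coe_filter, Finset.mem_univ, true_and]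
    exact matches_iff hN σ hσ i
  rw [mmp1, hset, Set.ncard_coe_finset]
  rw [lrc, List.length_ofFn]
  apply Finset.card_bij (fun i _ => i.val)
  · intro i hi
    rw [Finset.mem_filter] at hi
    rw [Finset.mem_filter, Finset.mem_range]
    refine ⟨i.isLt, ?_⟩
    intro j hj
    rw [getI_ofFn σ i.val i.isLt, getI_ofFn σ j (by omega)]
    have := hi.2 ⟨j, by omega⟩ (by rw [Fin.lt_def]; exact hj)
    simpa using this
  · intro i _ j _ h
    exact Fin.ext h
  · intro k hk
    rw [Finset.mem_filter, Finset.mem_range] at hk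
    refine ⟨⟨k, hk.1⟩, ?_, rfl⟩
    rw [Finset.mem_filter]
    refine ⟨Finset.mem_univ _, ?_⟩
    intro j hj
    have := hk.2 j.val (by rw [Fin.lt_def] at hj; exact hj)
    rw [getI_ofFn σ k hk.1, getI_ofFn σ j.val (by omega)] at this
    simpa using this

end PermBridge


theorem stmt19 (n : ℕ) (hn : 2 ≤ n) :
    ({σ : Equiv.Perm (Fin (2*n)) | UpDown σ ∧ mmp1 σ = n-1}.ncard : ℚ)
      = 2/3 * (n.choose 2 : ℚ) * (oddDF n : ℚ) := by
  classical
  haveI : Inhabited (Fin (2*n)) := ⟨⟨0, by omega⟩⟩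
  set S := {σ : Equiv.Perm (Fin (2*n)) | UpDown σ ∧ mmp1 σ = n-1} with hS
  have hNev : Even (2*n) := ⟨n, by ring⟩
  set Φ : Equiv.Perm (Fin (2*n)) → List (Fin (2*n)) := fun σ => (List.ofFn σ).reverse with hΦ
  have hinj : Function.Injective Φ := by
    intro σ τ h
    have := List.reverse_injective h
    exact Equiv.coe_fn_injective (List.ofFn_injective this)
  have himg : Φ '' S = ↑(UDL (Finset.univ : Finset (Fin (2*n))) 1) := by
    ext r
    simp only [Set.mem_image, Finset.mem_coe]
    constructor
    · rintro ⟨σ, ⟨hud, hm⟩, rfl⟩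
      have hrev : (Φ σ).reverse = List.ofFn σ := by simp [hΦ]
      have hlen : (Φ σ).length = 2*n := by simp [hΦ]
      have hEv : Even (Φ σ).length := by rw [hlen]; exact hNev
      obtain ⟨hIff, hCnt⟩ := BR (Φ σ) hEv
      have hrud : rud (Φ σ) := hIff.mpr (by rw [hrev]; exact (updown_iff σ).mp hud)
      have hc := hCnt hrud
      rw [hrev, hlen] at hc
      have hlrc : lrc (List.ofFn σ) = n - 1 := by
        rw [← mmp_eq_lrc hNev σ hud, hm]
      rw [mem_UDL]
      refine ⟨?_, ?_, hrud, ?_⟩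
      · exact List.nodup_reverse.mpr (List.nodup_ofFn.mpr σ.injective)
      · apply Finset.eq_univ_iff_forall.mpr
        intro x
        rw [mem_toFinset']
        simp only [hΦ, List.mem_reverse, List.mem_ofFn]
        exact ⟨σ⁻¹ x, by simp⟩
      · rw [hlrc] at hc
        omega
    · intro hr
      obtain ⟨hnd, htf, hrud, hfl⟩ := mem_UDL.mp hr
      have hlen : r.length = 2*n := by
        rw [length_of_mem_UDL hr, Finset.card_univ, Fintype.card_fin]
      have hlenrev : r.reverse.length = 2*n := by simp [hlen]
      set f : Fin (2*n) → Fin (2*n) :=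
        fun i => r.reverse.get ⟨i.val, by rw [hlenrev]; exact i.isLt⟩ with hf
      have hfinj : Function.Injective f := by
        intro a b hab
        have h2 := List.nodup_iff_injective_get.mp (List.nodup_reverse.mpr hnd) hab
        have h3 := congrArg Fin.val h2
        exact Fin.ext h3
      have hbij := (Finite.injective_iff_bijective).mp hfinj
      have hofn : List.ofFn (Equiv.ofBijective f hbij) = r.reverse := by
        apply List.ext_getElem (by simp [hlenrev])
        intro i h1 h2
        rw [List.getElem_ofFn]
        rfl
      refine ⟨Equiv.ofBijective f hbij, ?_, ?_⟩
      · have hEv : Even r.length := by rw [hlen]; exact hNev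
        obtain ⟨hIff, hCnt⟩ := BR r hEv
        have hud : UpDown (Equiv.ofBijective f hbij) :=
          (updown_iff _).mpr (by rw [hofn]; exact hIff.mp hrud)
        have hc := hCnt hrud
        rw [hlen, hfl] at hc
        refine ⟨hud, ?_⟩
        rw [mmp_eq_lrc hNev _ hud, hofn]
        omega
      · show (List.ofFn _).reverse = r
        rw [hofn, List.reverse_reverse]
  have hcard : S.ncard = (UDL (Finset.univ : Finset (Fin (2*n))) 1).card := by
    rw [← Set.ncard_coe_finset, ← himg, Set.ncard_image_of_injective _ hinj]
  rw [hcard, cardB n Finset.univ (by rw [Finset.card_univ, Fintype.card_fin]),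
    Nat.cast_choose_two]
  ring
end Bridge
end
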